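/- arXiv:1606.06490 — 3 statements merged into one kernel-verified Lean document; each statement's English description precedes it below -/
import Mathlib

section
/- Fix an SNR γ > 0, a blocklength m > 0, and a coding rate r < C(γ) such that (C(γ) − r)·√(m/V(γ)) ≥ 4/√(2π). Then the single-link finite-blocklength error probability ε(r) = P(γ,r,m), as a function of r, satisfies the strict inequality ε''(r) > 4·(ε'(r))², where ε' and ε'' denote the first and second derivatives with respect to r. (Pointwise inequality used in the proof of Proposition 1) -/
open MeasureTheory

/-- The Gaussian Q-function: `Q(w) = ∫_w^∞ (1/√(2π)) e^{−t²/2} dt`. -/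
noncomputable def Qfun (w : ℝ) : ℝ :=
  ∫ t in Set.Ioi w, (1 / Real.sqrt (2 * Real.pi)) * Real.exp (-t ^ 2 / 2)

/-- Shannon capacity `C(γ) = log₂(1+γ)`. -/
noncomputable def Cap (γ : ℝ) : ℝ := Real.logb 2 (1 + γ)

/-- Channel dispersion `V(γ) = (1 − (1+γ)^{−2})·(log₂ e)²`. -/
noncomputable def Vdisp (γ : ℝ) : ℝ :=
  (1 - ((1 + γ) ^ 2)⁻¹) * Real.logb 2 (Real.exp 1) ^ 2

/-- Single-link finite-blocklength error probability `P(γ,r,m)`. -/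
noncomputable def Perr (γ r m : ℝ) : ℝ :=
  Qfun ((Cap γ - r) / Real.sqrt (Vdisp γ / m))

/-- Instantaneous SNR in the Jakes outdated-CSI model: `γ = γ̄|ρĥ + √(1−ρ²)z|²`. -/
noncomputable def instSNR (ρ γbar : ℝ) (hhat z : ℂ) : ℝ :=
  γbar * ‖(ρ : ℂ) * hhat + (Real.sqrt (1 - ρ ^ 2) : ℂ) * z‖ ^ 2

/-- Expected single-link error under outdated CSI:
`ε̄(r) = ∫_ℂ (1/π) e^{−|z|²} P(γ̄|ρĥ + √(1−ρ²)z|², r, m) dz`. -/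
noncomputable def expErr (m ρ γbar : ℝ) (hhat : ℂ) (r : ℝ) : ℝ :=
  ∫ z : ℂ, (1 / Real.pi) * Real.exp (-‖z‖ ^ 2) * Perr (instSNR ρ γbar hhat z) r m

/-- Gaussian density. -/
noncomputable def gauss (t : ℝ) : ℝ := (1 / Real.sqrt (2 * Real.pi)) * Real.exp (-t ^ 2 / 2)

lemma gauss_cont : Continuous gauss := by
  unfold gauss
  continuity

lemma gauss_integrable : Integrable gauss := by
  have h := integrable_exp_neg_mul_sq (by norm_num : (0:ℝ) < 1/2)
  have : gauss = fun t => (1 / Real.sqrt (2 * Real.pi)) * Real.exp (-(1/2) * t ^ 2) := by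
    funext t; unfold gauss; ring_nf
  rw [this]
  exact h.const_mul _

lemma Qfun_split {a b : ℝ} (h : a ≤ b) :
    Qfun a = (∫ t in Set.Ioc a b, gauss t) + Qfun b := by
  have hd : ∀ w, Qfun w = ∫ t in Set.Ioi w, gauss t := fun _ => rfl
  rw [hd, hd, ← Set.Ioc_union_Ioi_eq_Ioi h,
    setIntegral_union Set.Ioc_disjoint_Ioi_same measurableSet_Ioi
      gauss_integrable.integrableOn gauss_integrable.integrableOn]

lemma Qfun_eq (w : ℝ) : Qfun w = Qfun 0 - ∫ t in (0:ℝ)..w, gauss t := by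
  rcases le_or_gt 0 w with h | h
  · rw [intervalIntegral.integral_of_le h, Qfun_split h]; ring
  · rw [intervalIntegral.integral_of_ge h.le, Qfun_split h.le]; ring

lemma hasDerivAt_Qfun (w : ℝ) : HasDerivAt Qfun (-(gauss w)) w := by
  have h : HasDerivAt (fun w => ∫ t in (0:ℝ)..w, gauss t) (gauss w) w :=
    intervalIntegral.integral_hasDerivAt_right (gauss_cont.intervalIntegrable _ _)
      (gauss_cont.stronglyMeasurableAtFilter _ _) gauss_cont.continuousAt
  have := (hasDerivAt_const w (Qfun 0)).sub h
  simp only [zero_sub] at this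
  exact (this.congr_deriv rfl).congr_of_eventuallyEq (by filter_upwards with x; rw [Qfun_eq]; rfl)

lemma gauss_pos (x : ℝ) : 0 < gauss x := by
  unfold gauss
  positivity

lemma hasDerivAt_gauss (x : ℝ) : HasDerivAt gauss (-x * gauss x) x := by
  have h1 : HasDerivAt (fun t : ℝ => -t ^ 2 / 2) (-(2 * x ^ 1) / 2) x :=
    ((hasDerivAt_pow 2 x).neg).div_const 2
  have h2 := (Real.hasDerivAt_exp (-x ^ 2 / 2)).comp x h1
  have h3 := h2.const_mul (1 / Real.sqrt (2 * Real.pi))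
  refine h3.congr_deriv ?_
  unfold gauss
  ring

/-- Pointwise inequality from the proof of Proposition 1: if `r < C(γ)` and
`(C(γ) − r)·√(m/V(γ)) ≥ 4/√(2π)`, then `ε''(r) > 4·(ε'(r))²` for
`ε(r) = P(γ,r,m)`. -/
theorem Perr_second_deriv_gt_four_sq
    (γ m r : ℝ) (hγ : 0 < γ) (hm : 0 < m) (hr : r < Cap γ)
    (hgap : 4 / Real.sqrt (2 * Real.pi) ≤ (Cap γ - r) * Real.sqrt (m / Vdisp γ)) :
    4 * (deriv (fun r' => Perr γ r' m) r) ^ 2 <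
      deriv (deriv (fun r' => Perr γ r' m)) r := by
  have hV : 0 < Vdisp γ := by
    unfold Vdisp
    have h1 : (1:ℝ) < (1 + γ) ^ 2 := by nlinarith
    have h2 : ((1 + γ) ^ 2)⁻¹ < 1 := by
      rw [inv_lt_one_iff₀]; right; exact h1
    have h3 : 0 < Real.logb 2 (Real.exp 1) := by
      rw [Real.logb, Real.log_exp]
      positivity
    have h4 : (0:ℝ) < 1 - ((1 + γ) ^ 2)⁻¹ := by linarith
    positivity
  set s := Real.sqrt (Vdisp γ / m) with hs_def
  have hs : 0 < s := Real.sqrt_pos.2 (by positivity)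
  set w := (Cap γ - r) / s with hw_def
  have inner : ∀ x : ℝ, HasDerivAt (fun r' => (Cap γ - r') / s) (-s⁻¹) x := by
    intro x
    have := ((hasDerivAt_id x).const_sub (Cap γ)).div_const s
    refine this.congr_deriv ?_
    ring
  have hf : ∀ x : ℝ, HasDerivAt (fun r' => Perr γ r' m)
      (gauss ((Cap γ - x) / s) * s⁻¹) x := by
    intro x
    have := (hasDerivAt_Qfun ((Cap γ - x) / s)).comp x (inner x)
    refine this.congr_deriv ?_
    ring
  have hderiv1 : deriv (fun r' => Perr γ r' m) = fun x => gauss ((Cap γ - x) / s) * s⁻¹ :=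
    funext fun x => (hf x).deriv
  have hf2 : HasDerivAt (fun x => gauss ((Cap γ - x) / s) * s⁻¹)
      (w * gauss w * s⁻¹ * s⁻¹) r := by
    have := (((hasDerivAt_gauss w).comp r (inner r)).mul_const s⁻¹)
    refine this.congr_deriv ?_
    rw [hw_def]
    ring
  have hderiv2 : deriv (deriv (fun r' => Perr γ r' m)) r = w * gauss w * s⁻¹ * s⁻¹ := by
    rw [hderiv1]
    exact hf2.deriv
  rw [hderiv2, (hf r).deriv]
  have hw_eq : w = (Cap γ - r) * Real.sqrt (m / Vdisp γ) := by
    rw [hw_def, hs_def, show m / Vdisp γ = (Vdisp γ / m)⁻¹ by rw [inv_div],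
      Real.sqrt_inv, div_eq_mul_inv]
  have hw4 : 4 / Real.sqrt (2 * Real.pi) ≤ w := hw_eq ▸ hgap
  have hwpos : 0 < w := lt_of_lt_of_le (by positivity) hw4
  have hgw : gauss w < 1 / Real.sqrt (2 * Real.pi) := by
    unfold gauss
    have : Real.exp (-w ^ 2 / 2) < 1 := by
      rw [Real.exp_lt_one_iff]
      nlinarith
    nlinarith [Real.sqrt_pos.2 (by positivity : (0:ℝ) < 2 * Real.pi),
      one_div_pos.2 (Real.sqrt_pos.2 (by positivity : (0:ℝ) < 2 * Real.pi))]
  have key : 4 * gauss w < w := by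
    have h4c : 4 * (1 / Real.sqrt (2 * Real.pi)) ≤ w := by
      rw [mul_one_div]; exact hw4
    nlinarith
  have hgwpos := gauss_pos w
  have hsinv : 0 < s⁻¹ := inv_pos.2 hs
  nlinarith [mul_pos hsinv hsinv, mul_pos hgwpos hgwpos,
    mul_lt_mul_of_pos_right key hgwpos]
end

section
/- Let ρ ∈ (0,1], ĥ ∈ ℂ, γ̄ > 0, and let z be a standard circularly-symmetric complex Gaussian (i.e., distributed on ℂ ≅ ℝ² with density (1/π)e^{−|z|²}). Set the instantaneous SNR γ = γ̄|ρĥ + √(1−ρ²)z|² and the outdated SNR γ̂ = γ̄|ĥ|². Then for every scheduling weight η with 0 < η ≤ ρ², the probability that the instantaneous SNR is at least ηγ̂ satisfies ℙ(γ ≥ ηγ̂) ≥ 1/2; equivalently, the Gaussian measure of the set {z ∈ ℂ : |ρĥ + √(1−ρ²)z|² ≥ η|ĥ|²} is at least 1/2. (Claim underlying the feasibility constraint η ≤ ρ² and the median statement of equation (3)) -/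
open MeasureTheory

lemma gaussC_eq : (fun z : ℂ => (1 / Real.pi) * Real.exp (-‖z‖ ^ 2))
    = (fun p : ℝ × ℝ => (1 / Real.pi) * (Real.exp (-1 * p.1 ^ 2) * Real.exp (-1 * p.2 ^ 2)))
      ∘ Complex.measurableEquivRealProd := by
  ext z
  simp only [Function.comp_apply]
  rw [← Real.exp_add]
  congr 1
  simp [Complex.sq_norm, Complex.normSq_apply, Complex.measurableEquivRealProd]
  ring

lemma gaussC_integrable :
    Integrable (fun z : ℂ => (1 / Real.pi) * Real.exp (-‖z‖ ^ 2)) := by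
  rw [gaussC_eq]
  rw [Complex.volume_preserving_equiv_real_prod.integrable_comp_emb
    Complex.measurableEquivRealProd.measurableEmbedding]
  rw [Measure.volume_eq_prod ℝ ℝ]
  exact (((integrable_exp_neg_mul_sq one_pos).mul_prod
    (integrable_exp_neg_mul_sq one_pos))).const_mul _

lemma gaussC_total :
    ∫ z : ℂ, (1 / Real.pi) * Real.exp (-‖z‖ ^ 2) = 1 := by
  have h1 : ∫ z : ℂ, (1 / Real.pi) * Real.exp (-‖z‖ ^ 2)
      = ∫ p : ℝ × ℝ, (1 / Real.pi) * (Real.exp (-1 * p.1 ^ 2) * Real.exp (-1 * p.2 ^ 2)) := by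
    rw [← Complex.volume_preserving_equiv_real_prod.integral_comp
      Complex.measurableEquivRealProd.measurableEmbedding]
    exact congrArg (fun g => ∫ z : ℂ, g z) gaussC_eq
  rw [h1, integral_const_mul, Measure.volume_eq_prod ℝ ℝ,
    integral_prod_mul (fun x : ℝ => Real.exp (-1 * x ^ 2)) (fun x : ℝ => Real.exp (-1 * x ^ 2)),
    integral_gaussian]
  rw [div_one, Real.mul_self_sqrt Real.pi_pos.le]
  field_simp

/-- **Median claim underlying the feasibility constraint `η ≤ ρ²` (equation (3)).**
Under the Jakes outdated-CSI model, for every `0 < η ≤ ρ²` the Gaussian measure of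
the set of fading realizations with instantaneous SNR at least `ηγ̂` is at least `1/2`. -/
theorem prob_instSNR_ge_weighted_outdated
    (ρ γbar η : ℝ) (hhat : ℂ)
    (hρ : ρ ∈ Set.Ioc (0 : ℝ) 1) (hγ : 0 < γbar)
    (hη : η ∈ Set.Ioc (0 : ℝ) (ρ ^ 2)) :
    (1 : ℝ) / 2 ≤
      ∫ z in {z : ℂ | η * (γbar * ‖hhat‖ ^ 2) ≤ instSNR ρ γbar hhat z},
        (1 / Real.pi) * Real.exp (-‖z‖ ^ 2) := by
  obtain ⟨hρ0, hρ1⟩ := hρ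
  obtain ⟨hη0, hηρ⟩ := hη
  set c : ℝ := Real.sqrt (1 - ρ ^ 2) with hc
  set a : ℂ := (starRingEnd ℂ) ((ρ : ℂ) * hhat) * (c : ℂ) with ha
  have hfpos : ∀ z : ℂ, 0 ≤ (1 / Real.pi) * Real.exp (-‖z‖ ^ 2) :=
    fun z => by positivity
  have hint : Integrable (fun z : ℂ => (1 / Real.pi) * Real.exp (-‖z‖ ^ 2)) :=
    gaussC_integrable
  set H : Set ℂ := {z | 0 ≤ (a * z).re} with hH
  have hHm : MeasurableSet H := by
    apply measurableSet_le measurable_const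
    exact (measurable_const.mul measurable_id).re
  -- H is contained in the target set
  have hsub : H ⊆ {z : ℂ | η * (γbar * ‖hhat‖ ^ 2) ≤ instSNR ρ γbar hhat z} := by
    intro z hz
    simp only [Set.mem_setOf_eq] at hz ⊢
    have key : ‖(ρ : ℂ) * hhat‖ ^ 2 ≤
        ‖(ρ : ℂ) * hhat + (c : ℂ) * z‖ ^ 2 := by
      rw [Complex.sq_norm, Complex.sq_norm, Complex.normSq_add]
      have h2 : ((ρ : ℂ) * hhat * (starRingEnd ℂ) ((c : ℂ) * z)).re = (a * z).re := by
        calc ((ρ : ℂ) * hhat * (starRingEnd ℂ) ((c : ℂ) * z)).re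
            = ((starRingEnd ℂ) ((ρ : ℂ) * hhat * (starRingEnd ℂ) ((c : ℂ) * z))).re :=
              (Complex.conj_re _).symm
          _ = (a * z).re := by
              rw [map_mul, Complex.conj_conj, ha, mul_assoc]
      rw [h2]
      have hz' : 0 ≤ (a * z).re := hz
      have := Complex.normSq_nonneg ((c : ℂ) * z)
      linarith
    have habs : ‖(ρ : ℂ) * hhat‖ ^ 2 = ρ ^ 2 * ‖hhat‖ ^ 2 := by
      rw [norm_mul, mul_pow, Complex.norm_real, Real.norm_eq_abs, sq_abs]
    have h3 : η * ‖hhat‖ ^ 2 ≤ ρ ^ 2 * ‖hhat‖ ^ 2 := by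
      apply mul_le_mul_of_nonneg_right hηρ (by positivity)
    unfold instSNR
    rw [← hc]
    nlinarith [norm_nonneg hhat, sq_nonneg (‖hhat‖)]
  -- half-plane has measure ≥ 1/2
  have hneg : MeasurePreserving (fun z : ℂ => -z) (volume : Measure ℂ) volume :=
    Measure.measurePreserving_neg volume
  have hflip : ∫ z in (fun z : ℂ => -z) ⁻¹' H, (1 / Real.pi) * Real.exp (-‖z‖ ^ 2) = ∫ z in H, (1 / Real.pi) * Real.exp (-‖z‖ ^ 2) := by
    have := hneg.setIntegral_preimage_emb (MeasurableEquiv.neg ℂ).measurableEmbedding (fun z : ℂ => (1 / Real.pi) * Real.exp (-‖z‖ ^ 2)) H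
    rw [← this]
    apply setIntegral_congr_fun
    · exact hHm.preimage hneg.measurable
    · intro z hz
      simp
  have hcompl : Hᶜ ⊆ (fun z : ℂ => -z) ⁻¹' H := by
    intro z hz
    simp only [hH, Set.mem_compl_iff, Set.mem_setOf_eq, not_le, Set.mem_preimage] at hz ⊢
    rw [mul_neg]
    simp only [Complex.neg_re]
    linarith
  have h1 : (∫ z in H, (1 / Real.pi) * Real.exp (-‖z‖ ^ 2))
      + ∫ z in Hᶜ, (1 / Real.pi) * Real.exp (-‖z‖ ^ 2) = 1 := by
    rw [integral_add_compl hHm hint]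
    exact gaussC_total
  have h2 : (∫ z in Hᶜ, (1 / Real.pi) * Real.exp (-‖z‖ ^ 2))
      ≤ ∫ z in (fun z : ℂ => -z) ⁻¹' H, (1 / Real.pi) * Real.exp (-‖z‖ ^ 2) := by
    apply setIntegral_mono_set hint.integrableOn
    · exact Filter.Eventually.of_forall hfpos
    · exact HasSubset.Subset.eventuallyLE hcompl
  have hHhalf : 1 / 2 ≤ ∫ z in H, (1 / Real.pi) * Real.exp (-‖z‖ ^ 2) := by
    rw [hflip] at h2
    linarith
  calc (1 : ℝ) / 2 ≤ ∫ z in H, (1 / Real.pi) * Real.exp (-‖z‖ ^ 2) := hHhalf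
    _ ≤ _ := by
      apply setIntegral_mono_set hint.integrableOn
      · exact Filter.Eventually.of_forall hfpos
      · exact HasSubset.Subset.eventuallyLE hsub
end

section
/- Fix a blocklength m > 0 and an error target ε ∈ (0, 1/2], and let q ≥ 0 satisfy Q(q) = ε. Then the finite-blocklength rate function γ ↦ R(γ, ε, m) = C(γ) − √(V(γ)/m)·q is strictly increasing on the set {γ > 0 : m·((1+γ)⁴ − (1+γ)²) > q²} (which is an interval of the form (γ₀, +∞)). (Precise version of the paper's claim that the scheduled coding rate is strictly increasing in min{η₁γ̂₁, η₂γ̂₂}) -/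
open MeasureTheory

set_option maxHeartbeats 1000000 in
/-- The finite-blocklength rate function `γ ↦ C(γ) − √(V(γ)/m)·q` (with `Q(q) = ε`,
`ε ∈ (0, 1/2]`, `q ≥ 0`) is strictly increasing on
`{γ > 0 : m·((1+γ)⁴ − (1+γ)²) > q²}`, a set which is an interval `(γ₀, +∞)`. -/
theorem rate_strictMonoOn
    (m εth q : ℝ) (hm : 0 < m)
    (hεth : εth ∈ Set.Ioc (0 : ℝ) (1 / 2))
    (hq : 0 ≤ q) (hQq : Qfun q = εth) :
    StrictMonoOn (fun γ => Cap γ - Real.sqrt (Vdisp γ / m) * q)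
      {γ : ℝ | 0 < γ ∧ q ^ 2 < m * ((1 + γ) ^ 4 - (1 + γ) ^ 2)} ∧
    ∃ γ₀ : ℝ, {γ : ℝ | 0 < γ ∧ q ^ 2 < m * ((1 + γ) ^ 4 - (1 + γ) ^ 2)} = Set.Ioi γ₀ := by
  have hlog2 : 0 < Real.log 2 := Real.log_pos (by norm_num)
  have hL : Real.logb 2 (Real.exp 1) = 1 / Real.log 2 := by
    simp [Real.logb, Real.log_exp]
  set g : ℝ → ℝ := fun γ => m * ((1 + γ) ^ 4 - (1 + γ) ^ 2) with hgdef
  -- an upper point where g exceeds q^2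
  set t : ℝ := q ^ 2 / (2 * m) with htdef
  have ht : 0 ≤ t := by positivity
  have hq2 : q ^ 2 = 2 * m * t := by rw [htdef]; field_simp
  have hb0 : (0 : ℝ) ≤ t + 1 := by linarith
  have hg0 : g 0 = 0 := by simp [hgdef]
  have hgb : q ^ 2 ≤ g (t + 1) := by
    have hP : 2 * t ≤ (1 + (t + 1)) ^ 4 - (1 + (t + 1)) ^ 2 := by nlinarith [sq_nonneg t, ht]
    have := mul_le_mul_of_nonneg_left hP hm.le
    simp only [hgdef]
    nlinarith [this]
  have gcont : ContinuousOn g (Set.Icc (0 : ℝ) (t + 1)) := by fun_prop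
  have hmem : q ^ 2 ∈ Set.Icc (g 0) (g (t + 1)) := ⟨by rw [hg0]; positivity, hgb⟩
  obtain ⟨γ₀, hγ₀mem, hγ₀⟩ := intermediate_value_Icc hb0 gcont hmem
  have hγ₀0 : 0 ≤ γ₀ := hγ₀mem.1
  have gmono : StrictMonoOn g (Set.Ici (0 : ℝ)) := by
    intro a ha b hb hab
    simp only [Set.mem_Ici] at ha hb
    have h1 : 0 < (1 + b) ^ 2 - (1 + a) ^ 2 := by nlinarith
    have h2 : 0 < (1 + b) ^ 2 + (1 + a) ^ 2 - 1 := by nlinarith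
    have h3 : (1 + a) ^ 4 - (1 + a) ^ 2 < (1 + b) ^ 4 - (1 + b) ^ 2 := by nlinarith [mul_pos h1 h2]
    simp only [hgdef]
    exact mul_lt_mul_of_pos_left h3 hm
  have hset : {γ : ℝ | 0 < γ ∧ q ^ 2 < m * ((1 + γ) ^ 4 - (1 + γ) ^ 2)} = Set.Ioi γ₀ := by
    ext γ
    simp only [Set.mem_setOf_eq, Set.mem_Ioi]
    constructor
    · rintro ⟨hγpos, hgt⟩
      by_contra hle
      push_neg at hle
      have hle2 : g γ ≤ g γ₀ := gmono.monotoneOn hγpos.le hγ₀0 hle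
      rw [hγ₀] at hle2
      exact absurd hgt (not_lt.2 hle2)
    · intro hγ
      have hγpos : 0 < γ := lt_of_le_of_lt hγ₀0 hγ
      refine ⟨hγpos, ?_⟩
      have hlt : g γ₀ < g γ := gmono hγ₀0 hγpos.le hγ
      rw [hγ₀] at hlt
      exact hlt
  -- positivity of the dispersion quotient
  have hVpos : ∀ x : ℝ, 0 < x → 0 < Vdisp x / m := by
    intro x hx
    have h1 : ((1 + x) ^ 2)⁻¹ < 1 := by
      rw [inv_lt_one_iff₀]; right; nlinarith
    have h2 : 0 < 1 - ((1 + x) ^ 2)⁻¹ := by linarith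
    have h3 : 0 < Real.logb 2 (Real.exp 1) := by rw [hL]; positivity
    unfold Vdisp
    positivity
  -- derivative in factored form
  have hderiv : ∀ x : ℝ, 0 < x →
      HasDerivAt (fun γ => Cap γ - Real.sqrt (Vdisp γ / m) * q)
        ((1 / Real.log 2) / (m * (1 + x) ^ 3 * Real.sqrt (Vdisp x / m)) *
          (Real.sqrt (Vdisp x / m) * m * (1 + x) ^ 2 - q * (1 / Real.log 2))) x := by
    intro x hx
    have hune : (1 + x : ℝ) ≠ 0 := by positivity
    have hV := hVpos x hx
    have hs : 0 < Real.sqrt (Vdisp x / m) := Real.sqrt_pos.2 hV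
    have hsne : Real.sqrt (Vdisp x / m) ≠ 0 := ne_of_gt hs
    have d1 : HasDerivAt (fun γ : ℝ => 1 + γ) 1 x := (hasDerivAt_id x).const_add 1
    have d2 : HasDerivAt (fun γ : ℝ => (1 + γ) ^ 2) (2 * (1 + x)) x := by
      simpa using d1.fun_pow 2
    have d3 : HasDerivAt (fun γ : ℝ => ((1 + γ) ^ 2)⁻¹)
        (-(2 * (1 + x)) / ((1 + x) ^ 2) ^ 2) x := d2.inv (pow_ne_zero 2 hune)
    have d4 : HasDerivAt (fun γ : ℝ => Vdisp γ / m)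
        ((2 * (1 + x)) / ((1 + x) ^ 2) ^ 2 * Real.logb 2 (Real.exp 1) ^ 2 / m) x := by
      have h := ((d3.const_sub 1).mul_const (Real.logb 2 (Real.exp 1) ^ 2)).div_const m
      unfold Vdisp
      refine h.congr_deriv ?_
      ring
    have d5 := (d4.sqrt (ne_of_gt hV)).mul_const q
    have d6 : HasDerivAt Cap (1 / (1 + x) / Real.log 2) x := by
      have h := (d1.log hune).div_const (Real.log 2)
      unfold Cap Real.logb
      exact h
    have base := d6.sub d5
    refine base.congr_deriv ?_
    rw [hL]
    have hlogne : Real.log 2 ≠ 0 := ne_of_gt hlog2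
    have hmne : m ≠ 0 := ne_of_gt hm
    set s : ℝ := Real.sqrt (Vdisp x / m) with hsdef
    field_simp
  refine ⟨?_, γ₀, hset⟩
  rw [hset]
  apply strictMonoOn_of_deriv_pos (convex_Ioi γ₀)
  · intro x hx
    have hx0 : 0 < x := lt_of_le_of_lt hγ₀0 hx
    exact (hderiv x hx0).differentiableAt.continuousAt.continuousWithinAt
  · intro x hx
    rw [interior_Ioi] at hx
    have hx0 : 0 < x := lt_of_le_of_lt hγ₀0 hx
    have hcond : q ^ 2 < m * ((1 + x) ^ 4 - (1 + x) ^ 2) := by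
      have hmemx : x ∈ {γ : ℝ | 0 < γ ∧ q ^ 2 < m * ((1 + γ) ^ 4 - (1 + γ) ^ 2)} := by
        rw [hset]; exact hx
      exact hmemx.2
    rw [(hderiv x hx0).deriv]
    have hV := hVpos x hx0
    set s : ℝ := Real.sqrt (Vdisp x / m) with hsdef
    have hspos : 0 < s := Real.sqrt_pos.2 hV
    set L : ℝ := 1 / Real.log 2 with hLdef
    have hLpos : 0 < L := by rw [hLdef]; positivity
    have hu0 : (0 : ℝ) < 1 + x := by linarith
    have hs2 : s ^ 2 * m = (1 - ((1 + x) ^ 2)⁻¹) * L ^ 2 := by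
      rw [hsdef, Real.sq_sqrt hV.le]
      unfold Vdisp
      rw [hL]
      field_simp
    have hinv : ((1 + x) ^ 2)⁻¹ * (1 + x) ^ 2 = 1 := inv_mul_cancel₀ (by positivity)
    have hexp : (s * m * (1 + x) ^ 2) ^ 2 = L ^ 2 * (m * ((1 + x) ^ 4 - (1 + x) ^ 2)) := by
      linear_combination (m * (1 + x) ^ 4) * hs2 - (L ^ 2 * m * (1 + x) ^ 2) * hinv
    have hsq : (q * L) ^ 2 < (s * m * (1 + x) ^ 2) ^ 2 := by
      calc (q * L) ^ 2 = L ^ 2 * q ^ 2 := by ring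
        _ < L ^ 2 * (m * ((1 + x) ^ 4 - (1 + x) ^ 2)) :=
            mul_lt_mul_of_pos_left hcond (pow_pos hLpos 2)
        _ = (s * m * (1 + x) ^ 2) ^ 2 := hexp.symm
    have key : q * L < s * m * (1 + x) ^ 2 :=
      lt_of_pow_lt_pow_left₀ 2 (by positivity) hsq
    have h1 : 0 < L / (m * (1 + x) ^ 3 * s) :=
      div_pos hLpos (by positivity)
    exact mul_pos h1 (sub_pos.2 key)
end
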